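/- The number of binary strings of length n in which every 1 is isolated and every 0 has a neighboring 0 satisfies d_1 = 1, d_2 = 1, d_3 = 3, d_4 = 4, and d_n = d_{n-1} + d_{n-3} for all n ≥ 5. -/

import Mathlib

/-- No two adjacent 1s. -/
def Solus {n : ℕ} (f : Fin n → Bool) : Prop :=
  ∀ i : ℕ, ∀ h : i + 1 < n, ¬(f ⟨i, by omega⟩ = true ∧ f ⟨i + 1, h⟩ = true)

/-- Every 0 has a neighboring 0. -/
def ZeroNbr {n : ℕ} (f : Fin n → Bool) : Prop :=
  ∀ i : Fin n, f i = false →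
    ∃ j : Fin n, (j.val = i.val + 1 ∨ j.val + 1 = i.val) ∧ f j = false

/-- A bitstring is persolus if all 1s are isolated and every 0 has a neighboring 0. -/
def Persolus {n : ℕ} (f : Fin n → Bool) : Prop := Solus f ∧ ZeroNbr f

/-- Number of persolus bitstrings of length `n`. -/
noncomputable def persolusCount (n : ℕ) : ℕ := Nat.card {f : Fin n → Bool // Persolus f}

namespace PersolusAux

inductive St | top | one | need0 | runC
deriving DecidableEq

def aux : St → List Bool → Bool
  | .top, [] => true
  | .one, [] => true
  | .need0, [] => false
  | .runC, [] => true
  | .top, true :: l => aux .one l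
  | .top, false :: l => aux .need0 l
  | .one, true :: _ => false
  | .one, false :: l => aux .need0 l
  | .need0, true :: _ => false
  | .need0, false :: l => aux .runC l
  | .runC, true :: l => aux .one l
  | .runC, false :: l => aux .runC l

def PS (l : List Bool) : Prop := ∀ i : ℕ, ¬(l.getD i false = true ∧ l.getD (i+1) false = true)

def PZ (l : List Bool) : Prop :=
  ∀ i : ℕ, l.getD i true = false →
    (l.getD (i+1) true = false ∨ (0 < i ∧ l.getD (i-1) true = false))

def PL (l : List Bool) : Prop := PS l ∧ PZ l

lemma LA (t : List Bool) : PL (true :: false :: t) ↔ PL (false :: t) := by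
  constructor
  · rintro ⟨hS, hZ⟩
    refine ⟨fun i => ?_, fun i hi => ?_⟩
    · match i with
      | 0 => simp
      | k+1 => simpa using hS (k+2)
    · match i, hi with
      | 0, _ =>
        rcases hZ 1 (by simp) with h | h
        · left; simpa using h
        · simp at h
      | k+1, hi =>
        rcases hZ (k+2) (by simpa using hi) with h | h
        · left; simpa using h
        · right; exact ⟨Nat.succ_pos _, by simpa using h.2⟩
  · rintro ⟨hS, hZ⟩
    refine ⟨fun i => ?_, fun i hi => ?_⟩
    · match i with
      | 0 => simp
      | k+1 => simpa using hS k
    · match i, hi with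
      | 0, hi => simp at hi
      | k+1, hi =>
        rcases hZ k (by simpa using hi) with h | h
        · left; simpa using h
        · right
          obtain ⟨hk, h2⟩ := h
          obtain ⟨m, rfl⟩ := Nat.exists_eq_add_of_lt hk
          refine ⟨Nat.succ_pos _, ?_⟩
          simpa using h2

lemma L3 (t : List Bool) : PL (false :: false :: false :: t) ↔ PL (false :: false :: t) := by
  constructor
  · rintro ⟨hS, hZ⟩
    refine ⟨fun i => ?_, fun i hi => ?_⟩
    · match i with
      | 0 => simp
      | 1 => simp
      | k+2 => simpa using hS (k+3)
    · match i, hi with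
      | 0, _ => left; simp
      | 1, _ => right; simp
      | k+2, hi =>
        rcases hZ (k+3) (by simpa using hi) with h | h
        · left; simpa using h
        · right
          refine ⟨Nat.succ_pos _, ?_⟩
          match k, h with
          | 0, _ => simp
          | m+1, h => simpa using h.2
  · rintro ⟨hS, hZ⟩
    refine ⟨fun i => ?_, fun i hi => ?_⟩
    · match i with
      | 0 => simp
      | 1 => simp
      | 2 => simp
      | k+3 => simpa using hS (k+2)
    · match i, hi with
      | 0, _ => left; simp
      | 1, _ => left; simp
      | 2, _ => right; simp
      | k+3, hi =>
        rcases hZ (k+2) (by simpa using hi) with h | h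
        · left; simpa using h
        · right
          refine ⟨Nat.succ_pos _, ?_⟩
          match k, h with
          | 0, _ => simp
          | m+1, h => simpa using h.2

lemma L4 (t : List Bool) : PL (false :: false :: true :: t) ↔ PL (true :: t) := by
  constructor
  · rintro ⟨hS, hZ⟩
    refine ⟨fun i => ?_, fun i hi => ?_⟩
    · match i with
      | 0 => simpa using hS 2
      | k+1 => simpa using hS (k+3)
    · match i, hi with
      | 0, hi => simp at hi
      | k+1, hi =>
        rcases hZ (k+3) (by simpa using hi) with h | h
        · left; simpa using h
        · match k, h with
          | 0, h => simp at h
          | m+1, h =>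
            right
            exact ⟨Nat.succ_pos _, by simpa using h.2⟩
  · rintro ⟨hS, hZ⟩
    refine ⟨fun i => ?_, fun i hi => ?_⟩
    · match i with
      | 0 => simp
      | 1 => simp
      | 2 => simpa using hS 0
      | k+3 => simpa using hS (k+1)
    · match i, hi with
      | 0, _ => left; simp
      | 1, _ => right; simp
      | 2, hi => simp at hi
      | k+3, hi =>
        rcases hZ (k+1) (by simpa using hi) with h | h
        · left; simpa using h
        · match k, h with
          | 0, h => simp at h
          | m+1, h =>
            right
            exact ⟨Nat.succ_pos _, by simpa using h.2⟩

lemma F1 (t : List Bool) : ¬ PL (true :: true :: t) := by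
  intro ⟨hS, _⟩; exact hS 0 (by simp)

lemma F2 (t : List Bool) : ¬ PL (true :: false :: true :: t) := by
  intro ⟨_, hZ⟩
  rcases hZ 1 (by simp) with h | h
  · simp at h
  · simp at h

theorem aux_iff (l : List Bool) :
    (aux .top l = true ↔ PL l) ∧ (aux .one l = true ↔ PL (true :: l)) ∧
    (aux .need0 l = true ↔ PL (true :: false :: l)) ∧
    (aux .runC l = true ↔ PL (false :: false :: l)) := by
  induction l with
  | nil =>
    refine ⟨?_, ?_, ?_, ?_⟩
    · simp only [aux]
      constructor
      · intro _; exact ⟨fun i => by simp, fun i h => by simp at h⟩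
      · intro _; trivial
    · simp only [aux]
      constructor
      · intro _
        refine ⟨fun i => ?_, fun i h => ?_⟩
        · match i with
          | 0 => simp
          | (k+1) => simp
        · match i with
          | 0 => simp at h
          | (k+1) => simp at h
      · intro _; trivial
    · simp only [aux]
      constructor
      · intro h; exact absurd h (by simp)
      · intro ⟨_, hZ⟩
        rcases hZ 1 (by simp) with h | h
        · simp at h
        · simp at h
    · simp only [aux]
      constructor
      · intro _
        refine ⟨fun i => ?_, fun i h => ?_⟩
        · match i with
          | 0 => simp
          | (k+1) => simp
        · match i with
          | 0 => left; simp
          | 1 => right; simp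
          | (k+2) => simp at h
      · intro _; trivial
  | cons b t IH =>
    obtain ⟨iht, iho, ihn, ihr⟩ := IH
    cases b
    · refine ⟨?_, ?_, ?_, ?_⟩
      · simpa only [aux] using ihn.trans (LA t)
      · simpa only [aux] using ihn
      · simpa only [aux] using ihr.trans (LA (false :: t)).symm
      · simpa only [aux] using ihr.trans (L3 t).symm
    · refine ⟨?_, ?_, ?_, ?_⟩
      · simpa only [aux] using iho
      · simp only [aux]
        exact ⟨fun h => by simp at h, fun h => absurd h (F1 t)⟩
      · simp only [aux]
        exact ⟨fun h => by simp at h, fun h => absurd h (F2 t)⟩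
      · simpa only [aux] using iho.trans (L4 t).symm

lemma getD_ofFn {n : ℕ} (f : Fin n → Bool) (i : ℕ) (d : Bool) :
    (List.ofFn f).getD i d = if h : i < n then f ⟨i, h⟩ else d := by
  rw [List.getD_eq_getElem?_getD, List.getElem?_ofFn]
  split <;> simp

lemma ofFn_getD {n : ℕ} (l : List Bool) (h : l.length = n) :
    List.ofFn (fun i : Fin n => l.getD i false) = l := by
  apply List.ext_getElem (by simp [h])
  intro i h1 h2
  simp only [List.getElem_ofFn]
  exact List.getD_eq_getElem l false h2

lemma persolus_iff {n : ℕ} (f : Fin n → Bool) : Persolus f ↔ PL (List.ofFn f) := by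
  constructor
  · rintro ⟨hS, hZ⟩
    constructor
    · intro i
      simp only [getD_ofFn]
      rcases lt_or_ge (i+1) n with h | h
      · rw [dif_pos (by omega : i < n), dif_pos h]
        exact hS i h
      · rw [dif_neg (by omega : ¬ i + 1 < n)]
        simp
    · intro i hi
      rw [getD_ofFn] at hi
      by_cases hin : i < n
      · rw [dif_pos hin] at hi
        obtain ⟨j, hj, hjf⟩ := hZ ⟨i, hin⟩ hi
        rcases hj with hj | hj
        · left
          have hj' : (j : ℕ) = i + 1 := by simpa using hj
          have h1 : i + 1 < n := by have := j.isLt; omega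
          rw [getD_ofFn, dif_pos h1]
          have : (⟨i + 1, h1⟩ : Fin n) = j := Fin.ext (by simp [hj'])
          rw [this]; exact hjf
        · right
          have hj' : (j : ℕ) + 1 = i := by simpa using hj
          have hpos : 0 < i := by omega
          refine ⟨hpos, ?_⟩
          rw [getD_ofFn, dif_pos (by omega : i - 1 < n)]
          have : (⟨i - 1, by omega⟩ : Fin n) = j := Fin.ext (by simp; omega)
          rw [this]; exact hjf
      · rw [dif_neg hin] at hi
        simp at hi
  · rintro ⟨hS, hZ⟩
    constructor
    · intro i h
      have := hS i
      rw [getD_ofFn, getD_ofFn, dif_pos (by omega : i < n), dif_pos h] at this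
      exact this
    · intro i hfi
      have hi : (List.ofFn f).getD i.val true = false := by
        rw [getD_ofFn, dif_pos i.isLt]
        simpa using hfi
      rcases hZ i.val hi with h | ⟨hpos, h⟩
      · by_cases hr : i.val + 1 < n
        · refine ⟨⟨i.val + 1, hr⟩, Or.inl rfl, ?_⟩
          rw [getD_ofFn, dif_pos hr] at h
          exact h
        · rw [getD_ofFn, dif_neg hr] at h
          simp at h
      · refine ⟨⟨i.val - 1, by omega⟩, Or.inr (by simp; omega), ?_⟩
        rw [getD_ofFn, dif_pos (by omega : i.val - 1 < n)] at h
        exact h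

def LT (s : St) (n : ℕ) := {l : List Bool // l.length = n ∧ aux s l = true}

instance (s : St) (n : ℕ) : Finite (LT s n) := by
  apply Finite.of_injective (fun x : LT s n => (fun i : Fin n => x.1.getD i false))
  intro x y hxy
  apply Subtype.ext
  rw [← ofFn_getD x.1 x.2.1, ← ofFn_getD y.1 y.2.1]
  exact congrArg List.ofFn hxy

noncomputable def c (s : St) (n : ℕ) : ℕ := Nat.card (LT s n)

def d : St → ℕ → ℕ
  | .top, 0 => 1
  | .one, 0 => 1
  | .need0, 0 => 0
  | .runC, 0 => 1
  | .top, n+1 => d .one n + d .need0 n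
  | .one, n+1 => d .need0 n
  | .need0, n+1 => d .runC n
  | .runC, n+1 => d .one n + d .runC n

lemma card_single (s s' : St) (hd : ∀ t, aux s (true :: t) = false)
    (hf : ∀ t, aux s (false :: t) = aux s' t) (n : ℕ) : c s (n+1) = c s' n := by
  symm
  apply Nat.card_eq_of_bijective (fun x : LT s' n =>
    (⟨false :: x.1, by simp [x.2.1], by rw [hf]; exact x.2.2⟩ : LT s (n+1)))
  constructor
  · intro x y hxy
    apply Subtype.ext
    simpa using congrArg Subtype.val hxy
  · rintro ⟨l, hl, ha⟩
    match l, hl, ha with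
    | true :: t, hl, ha => rw [hd] at ha; simp at ha
    | false :: t, hl, ha =>
      exact ⟨⟨t, by simpa using hl, by rw [hf] at ha; exact ha⟩, rfl⟩

lemma card_double (s s₁ s₂ : St) (hd : ∀ t, aux s (true :: t) = aux s₁ t)
    (hf : ∀ t, aux s (false :: t) = aux s₂ t) (n : ℕ) : c s (n+1) = c s₁ n + c s₂ n := by
  simp only [c]
  rw [← Nat.card_sum]
  symm
  apply Nat.card_eq_of_bijective (Sum.elim
    (fun x : LT s₁ n => (⟨true :: x.1, by simp [x.2.1], by rw [hd]; exact x.2.2⟩ : LT s (n+1)))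
    (fun x : LT s₂ n => (⟨false :: x.1, by simp [x.2.1], by rw [hf]; exact x.2.2⟩ : LT s (n+1))))
  constructor
  · rintro (x | x) (y | y) hxy <;>
      · first
        | (apply congrArg; apply Subtype.ext; simpa using congrArg Subtype.val hxy)
        | (exfalso; simpa using congrArg Subtype.val hxy)
  · rintro ⟨l, hl, ha⟩
    match l, hl, ha with
    | true :: t, hl, ha =>
      exact ⟨Sum.inl ⟨t, by simpa using hl, by rw [hd] at ha; exact ha⟩, rfl⟩
    | false :: t, hl, ha =>
      exact ⟨Sum.inr ⟨t, by simpa using hl, by rw [hf] at ha; exact ha⟩, rfl⟩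

lemma c_eq_d (n : ℕ) (s : St) : c s n = d s n := by
  induction n generalizing s with
  | zero =>
    cases s
    · have : Unique (LT .top 0) := ⟨⟨⟨[], rfl, rfl⟩⟩, by
        rintro ⟨l, hl, ha⟩; apply Subtype.ext; simpa using List.length_eq_zero_iff.mp hl⟩
      simpa [c, d] using Nat.card_unique
    · have : Unique (LT .one 0) := ⟨⟨⟨[], rfl, rfl⟩⟩, by
        rintro ⟨l, hl, ha⟩; apply Subtype.ext; simpa using List.length_eq_zero_iff.mp hl⟩
      simpa [c, d] using Nat.card_unique
    · have : IsEmpty (LT .need0 0) := ⟨by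
        rintro ⟨l, hl, ha⟩
        rw [List.length_eq_zero_iff.mp hl] at ha
        simp [aux] at ha⟩
      simpa [c, d] using Nat.card_of_isEmpty
    · have : Unique (LT .runC 0) := ⟨⟨⟨[], rfl, rfl⟩⟩, by
        rintro ⟨l, hl, ha⟩; apply Subtype.ext; simpa using List.length_eq_zero_iff.mp hl⟩
      simpa [c, d] using Nat.card_unique
  | succ n ih =>
    cases s
    · rw [card_double .top .one .need0 (fun t => rfl) (fun t => rfl), ih, ih]; rfl
    · rw [card_single .one .need0 (fun t => rfl) (fun t => rfl), ih]; rfl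
    · rw [card_single .need0 .runC (fun t => rfl) (fun t => rfl), ih]; rfl
    · rw [card_double .runC .one .runC (fun t => rfl) (fun t => rfl), ih, ih]; rfl

lemma persolusCount_eq (n : ℕ) : persolusCount n = d .top n := by
  rw [← c_eq_d n .top]
  apply Nat.card_eq_of_bijective (fun x : {f : Fin n → Bool // Persolus f} =>
    (⟨List.ofFn x.1, by simp, (aux_iff (List.ofFn x.1)).1.mpr ((persolus_iff x.1).mp x.2)⟩ :
      LT .top n))
  constructor
  · intro x y hxy
    apply Subtype.ext
    exact List.ofFn_injective (by simpa using congrArg Subtype.val hxy)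
  · rintro ⟨l, hl, ha⟩
    refine ⟨⟨fun i => l.getD i false, (persolus_iff _).mpr ?_⟩, ?_⟩
    · rw [ofFn_getD l hl]
      exact (aux_iff l).1.mp ha
    · apply Subtype.ext
      simpa using ofFn_getD l hl

end PersolusAux

theorem persolus_count_recurrence :
    persolusCount 1 = 1 ∧ persolusCount 2 = 1 ∧ persolusCount 3 = 3 ∧ persolusCount 4 = 4 ∧
    (∀ n : ℕ, 5 ≤ n → persolusCount n = persolusCount (n - 1) + persolusCount (n - 3)) := by
  have key : ∀ n, persolusCount n = PersolusAux.d .top n := PersolusAux.persolusCount_eq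
  refine ⟨by rw [key]; rfl, by rw [key]; rfl, by rw [key]; rfl, by rw [key]; rfl, ?_⟩
  intro n hn
  obtain ⟨k, rfl⟩ : ∃ k, n = k + 5 := ⟨n - 5, by omega⟩
  rw [key, key, key]
  have e1 : k + 5 - 1 = k + 4 := by omega
  have e3 : k + 5 - 3 = k + 2 := by omega
  rw [e1, e3]
  have ht : ∀ m, PersolusAux.d .top (m+1) = PersolusAux.d .one m + PersolusAux.d .need0 m :=
    fun _ => rfl
  have ho : ∀ m, PersolusAux.d .one (m+1) = PersolusAux.d .need0 m := fun _ => rfl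
  have hn0 : ∀ m, PersolusAux.d .need0 (m+1) = PersolusAux.d .runC m := fun _ => rfl
  have hr : ∀ m, PersolusAux.d .runC (m+1) = PersolusAux.d .one m + PersolusAux.d .runC m :=
    fun _ => rfl
  simp only [show k+5 = k+4+1 from rfl, show k+4 = k+3+1 from rfl, show k+3 = k+2+1 from rfl,
    show k+2 = k+1+1 from rfl, ht, ho, hn0, hr]
  omega
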